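/- Let μ = μ₁ + μ₂ i be a complex number with μ₁ ≥ 0, let 0 ≤ λ₀ < 1, and let u₂, v₁ be real numbers with v₁ ≤ −(1−λ₀)(1+u₂²)/2. Set w = λ₀ + (1−λ₀) u₂ i and assume μ + w ≠ 0. Then Re( w + v₁/(μ + w) ) ≤ λ₀. -/
import Mathlib


open Complex

/-- Boundary-condition verification for the admissibility lemma applied to
`ψ(u,v) = u + v/(μ+u)`. -/
theorem admissibility_boundary (μ : ℂ) (hμ : 0 ≤ μ.re)
    (lam u₂ v₁ : ℝ) (hlam0 : 0 ≤ lam) (hlam1 : lam < 1)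
    (hv : v₁ ≤ -(1 - lam) * (1 + u₂ ^ 2) / 2)
    (hne : μ + ((lam : ℂ) + (1 - (lam : ℂ)) * (u₂ : ℂ) * I) ≠ 0) :
    ((((lam : ℂ) + (1 - (lam : ℂ)) * (u₂ : ℂ) * I)
      + (v₁ : ℂ) / (μ + ((lam : ℂ) + (1 - (lam : ℂ)) * (u₂ : ℂ) * I))).re) ≤ lam := by
  have hv0 : v₁ ≤ 0 := by nlinarith [sq_nonneg u₂]
  set A := μ + ((lam : ℂ) + (1 - (lam : ℂ)) * (u₂ : ℂ) * I) with hA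
  have hAre : A.re = μ.re + lam := by simp [hA]
  have hAre0 : 0 ≤ A.re := by rw [hAre]; linarith
  have hsq : 0 ≤ Complex.normSq A := Complex.normSq_nonneg A
  have hdiv : ((v₁ : ℂ) / A).re = v₁ * A.re / Complex.normSq A := by
    simp [Complex.div_re]
  have hre : (((lam : ℂ) + (1 - (lam : ℂ)) * (u₂ : ℂ) * I) + (v₁ : ℂ) / A).re
      = lam + v₁ * A.re / Complex.normSq A := by
    simp [hdiv]
  rw [hre]
  have : v₁ * A.re / Complex.normSq A ≤ 0 :=
    div_nonpos_of_nonpos_of_nonneg (mul_nonpos_of_nonpos_of_nonneg hv0 hAre0) hsq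
  linarith
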